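/- arXiv:2511.20771 — 2 statements merged into one kernel-verified Lean document; each statement's English description precedes it below -/
import Mathlib

section
/- Every level-c binary phylogenetic network has scanwidth at most c + 1. -/
/-- A finite digraph on vertex type `V`. -/
structure Digr (V : Type) where
  verts : Finset V
  arcs  : Finset (V × V)
  arc_mem : ∀ a ∈ arcs, a.1 ∈ verts ∧ a.2 ∈ verts ∧ a.1 ≠ a.2

namespace Digr

variable {V : Type} [DecidableEq V]

def Adj (D : Digr V) (u v : V) : Prop := (u, v) ∈ D.arcs

def Reach (D : Digr V) : V → V → Prop := Relation.ReflTransGen D.Adj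

def SReach (D : Digr V) : V → V → Prop := Relation.TransGen D.Adj

def Acyclic (D : Digr V) : Prop := ∀ v, ¬ D.SReach v v

def inDeg (D : Digr V) (v : V) : ℕ := (D.arcs.filter fun a => a.2 = v).card

def outDeg (D : Digr V) (v : V) : ℕ := (D.arcs.filter fun a => a.1 = v).card

def maxOutDeg (D : Digr V) : ℕ := D.verts.sup D.outDeg

def IsRoot (D : Digr V) (v : V) : Prop := v ∈ D.verts ∧ D.inDeg v = 0

/-- A rooted DAG: acyclic with exactly one root. -/
def Rooted (D : Digr V) : Prop := D.Acyclic ∧ ∃! r, D.IsRoot r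

/-- A rooted DAG all of whose vertices are reachable from the root. -/
def RootedConn (D : Digr V) : Prop :=
  D.Acyclic ∧ ∃ r, D.IsRoot r ∧ ∀ v ∈ D.verts, D.Reach r v

def leaves (D : Digr V) : Set V := {v | v ∈ D.verts ∧ D.outDeg v = 0}

/-- An out-tree: a rooted DAG in which every vertex has in-degree at most 1. -/
def IsOutTree (D : Digr V) : Prop := D.Rooted ∧ ∀ v ∈ D.verts, D.inDeg v ≤ 1

/-- `Γ` is a tree extension of `D`. -/
def IsTreeExt (D Γ : Digr V) : Prop :=
  Γ.IsOutTree ∧ Γ.verts = D.verts ∧ ∀ a ∈ D.arcs, Γ.SReach a.1 a.2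

/-- `GW_t(Γ) = {(u,v) ∈ A(D) | u >_Γ t ≥_Γ v}`. -/
def GW (D Γ : Digr V) (t : V) : Set (V × V) :=
  {a | a ∈ D.arcs ∧ Γ.SReach a.1 t ∧ Γ.Reach t a.2}

/-- `HW_t(Γ) = {(u,v) ∈ A(D) | u ≥_Γ t >_Γ v}`. -/
def HW (D Γ : Digr V) (t : V) : Set (V × V) :=
  {a | a ∈ D.arcs ∧ Γ.Reach a.1 t ∧ Γ.SReach t a.2}

/-- `sw_D(Γ)`. -/
noncomputable def swOf (D Γ : Digr V) : ℕ := Γ.verts.sup fun t => (GW D Γ t).ncard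

/-- The scanwidth of `D`: minimum width over all tree extensions. -/
noncomputable def scanwidth (D : Digr V) : ℕ :=
  sInf {k | ∃ Γ : Digr V, IsTreeExt D Γ ∧ swOf D Γ = k}

/-- The subgraph of `D` induced by `U` is weakly connected. -/
def WConnOn (D : Digr V) (U : Set V) : Prop :=
  ∀ u ∈ U, ∀ v ∈ U, Relation.ReflTransGen
    (fun a b => a ∈ U ∧ b ∈ U ∧ ((a, b) ∈ D.arcs ∨ (b, a) ∈ D.arcs)) u v

/-- A canonical tree extension of `D`. -/
def Canonical (D Γ : Digr V) : Prop :=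
  IsTreeExt D Γ ∧ ∀ t ∈ Γ.verts, D.WConnOn {v | Γ.Reach t v}

/-- Phylogenetic network: rooted DAG whose root has out-degree ≥ 2 and each
non-root vertex has in-degree 1 or out-degree 1, but not both. -/
def IsNetwork (N : Digr V) : Prop :=
  N.Rooted ∧ ∀ r, N.IsRoot r → 2 ≤ N.outDeg r ∧
    ∀ v ∈ N.verts, v ≠ r → Xor' (N.inDeg v = 1) (N.outDeg v = 1)

/-- Phylogenetic tree: a network without reticulations. -/
def IsPhyloTree (T : Digr V) : Prop := T.IsNetwork ∧ ∀ v ∈ T.verts, T.inDeg v ≤ 1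

def BinaryD (D : Digr V) : Prop := ∀ v ∈ D.verts, D.inDeg v ≤ 2 ∧ D.outDeg v ≤ 2

/-- One in-splitting step. -/
def InSplit (D D' : Digr V) : Prop :=
  ∃ v u w x, 3 ≤ D.inDeg v ∧ (u, v) ∈ D.arcs ∧ (w, v) ∈ D.arcs ∧ u ≠ w ∧
    x ∉ D.verts ∧ D'.verts = insert x D.verts ∧
    D'.arcs = insert (u, x) (insert (w, x) (insert (x, v)
      ((D.arcs.erase (u, v)).erase (w, v))))

/-- One out-splitting step. -/
def OutSplit (D D' : Digr V) : Prop :=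
  ∃ v u w x, 3 ≤ D.outDeg v ∧ (v, u) ∈ D.arcs ∧ (v, w) ∈ D.arcs ∧ u ≠ w ∧
    x ∉ D.verts ∧ D'.verts = insert x D.verts ∧
    D'.arcs = insert (v, x) (insert (x, u) (insert (x, w)
      ((D.arcs.erase (v, u)).erase (v, w))))

/-- Binary in-resolution: exhaustive in-splitting. -/
def BinInRes (D D' : Digr V) : Prop :=
  Relation.ReflTransGen InSplit D D' ∧ ∀ v ∈ D'.verts, D'.inDeg v ≤ 2

/-- Binary out-resolution: exhaustive out-splitting. -/
def BinOutRes (D D' : Digr V) : Prop :=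
  Relation.ReflTransGen OutSplit D D' ∧ ∀ v ∈ D'.verts, D'.outDeg v ≤ 2

/-- Binary resolution: binary out-resolution of a binary in-resolution. -/
def BinRes (D D' : Digr V) : Prop := ∃ D'' : Digr V, BinInRes D D'' ∧ BinOutRes D'' D'

def SubD (D' D : Digr V) : Prop := D'.verts ⊆ D.verts ∧ D'.arcs ⊆ D.arcs

/-- Leaf-monotone subdigraph. -/
def LeafMono (D' D : Digr V) : Prop := SubD D' D ∧ D'.leaves ⊆ D.leaves

/-- One arc subdivision step. -/
def SubdivStep (D D' : Digr V) : Prop :=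
  ∃ u v w, (u, v) ∈ D.arcs ∧ w ∉ D.verts ∧ D'.verts = insert w D.verts ∧
    D'.arcs = insert (u, w) (insert (w, v) (D.arcs.erase (u, v)))

/-- `D'` is a subdivision of `D`. -/
def IsSubdivisionOf (D' D : Digr V) : Prop := Relation.ReflTransGen SubdivStep D D'

/-- Leaf-respecting isomorphism. -/
def LeafIso (D D' : Digr V) : Prop :=
  ∃ ι : V → V, Set.BijOn ι ↑D.verts ↑D'.verts ∧
    (∀ u v, u ∈ D.verts → v ∈ D.verts → ((u, v) ∈ D.arcs ↔ (ι u, ι v) ∈ D'.arcs)) ∧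
    ∀ ℓ ∈ D.leaves, ι ℓ = ℓ

/-- `N` firmly displays `T`. -/
def FirmDisp (N T : Digr V) : Prop :=
  ∃ T' N' : Digr V, IsSubdivisionOf T' T ∧ LeafMono N' N ∧ LeafIso T' N'

/-- `N` softly displays `T`. -/
def SoftDisp (N T : Digr V) : Prop :=
  ∃ N' T' : Digr V, BinRes N N' ∧ BinRes T T' ∧ FirmDisp N' T'

def arcsOfList (l : List V) : List (V × V) := l.zip l.tail

def firstArc (l : List V) : Option (V × V) :=
  match l with
  | a :: b :: _ => some (a, b)
  | _ => none

/-- `l` is (the vertex list of) a directed path in `D`. -/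
def IsPathList (D : Digr V) (l : List V) : Prop :=
  l ≠ [] ∧ l.Nodup ∧ (∀ v ∈ l, v ∈ D.verts) ∧ l.Chain' D.Adj

/-- Eventual arc-disjointness of two paths (as vertex lists). -/
def EAD : List V → List V → Prop
  | a :: b :: p, q =>
      2 ≤ q.length ∧
        (List.Disjoint (arcsOfList (a :: b :: p)) (arcsOfList q) ∨
          (some a = q.head? ∧ EAD (b :: p) q.tail))
  | _, _ => False

/-- Soft pseudo-embedding of the set of arcs `F` (of a forest in `T`) into `N`. -/
structure IsSPE (N T : Digr V) (F : Set (V × V)) (φ : V × V → List V) : Prop where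
  path : ∀ a ∈ F, IsPathList N (φ a) ∧ 2 ≤ (φ a).length
  spe1 : ∀ x y z, (x, y) ∈ F → (y, z) ∈ F →
    (φ (x, y)).getLast? = (φ (y, z)).head?
  spe2 : ∀ x y x' y', (x, y) ∈ F → (x', y') ∈ F → x ≠ x' →
    List.Disjoint (arcsOfList (φ (x, y))) (arcsOfList (φ (x', y')))
  spe3 : ∀ x y y', (x, y) ∈ F → (x, y') ∈ F → y ≠ y' → EAD (φ (x, y)) (φ (x, y'))
  spe4 : ∀ x ℓ, (x, ℓ) ∈ F → ℓ ∈ T.leaves → (φ (x, ℓ)).getLast? = some ℓ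

/-- The downward-closed forest below a top-arc set `S`. -/
def ForestBelow (T : Digr V) (S : Set (V × V)) : Set (V × V) :=
  S ∪ {b | b ∈ T.arcs ∧ ∃ a ∈ S, T.Reach a.2 b.1}

/-- `S` is a top-arc set (an arc set whose tails have in-degree 0 in the forest below). -/
def IsTopArcSet (T : Digr V) (S : Set (V × V)) : Prop :=
  S ⊆ ↑T.arcs ∧ ∀ a ∈ S, ∀ b ∈ ForestBelow T S, b.2 ≠ a.1

def forestLeaves (T : Digr V) (S : Set (V × V)) : Set V :=
  {x | x ∈ T.leaves ∧ ∃ a ∈ ForestBelow T S, a.2 = x}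

/-- Signature `[B, S, ψ]` (with `ψ` represented as an `Option`-valued map with support `S`). -/
def IsSig (N T : Digr V) (B S : Set (V × V)) (ψ : V × V → Option (V × V)) : Prop :=
  B ⊆ ↑N.arcs ∧ IsTopArcSet T S ∧
    forestLeaves T S = {ℓ | ℓ ∈ N.leaves ∧ ∃ a ∈ B, N.Reach a.2 ℓ} ∧
    (∀ a ∈ S, ∃ b ∈ B, ψ a = some b) ∧ ∀ a, a ∉ S → ψ a = none

/-- Valid signature `[B, S, ψ]`. -/
def ValidSig (N T : Digr V) (B S : Set (V × V)) (ψ : V × V → Option (V × V)) : Prop :=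
  IsSig N T B S ψ ∧
    ∃ φ : V × V → List V, IsSPE N T (ForestBelow T S) φ ∧
      ∀ a ∈ S, firstArc (φ a) = ψ a

/-- Restriction of (the `Option`-valued) `ψ` to `S`. -/
noncomputable def restrictPsi (ψ : V × V → Option (V × V)) (S : Set (V × V)) :
    V × V → Option (V × V) := fun a =>
  @ite _ (a ∈ S) (Classical.propDecidable _) (ψ a) none

/-- Downward-closed set of arcs of `T`. -/
def DownClosed (T : Digr V) (F : Set (V × V)) : Prop :=
  F ⊆ ↑T.arcs ∧ ∀ a ∈ F, ∀ b ∈ T.arcs, T.Reach a.2 b.1 → b ∈ F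

/-- `D'` arises from `D` by attaching a new root `ρ` above the old root. -/
def AttachRoot (D : Digr V) (ρ : V) (D' : Digr V) : Prop :=
  ρ ∉ D.verts ∧ D'.verts = insert ρ D.verts ∧
    ∃ r, D.IsRoot r ∧ D'.arcs = insert (ρ, r) D.arcs

/-- Assumption (as:NTGamma): `Ns` binary network, `Ts` tree with the same leaves,
`N` and `T` obtained by attaching new roots `ρN`, `ρT`. -/
def PaperSetup (Ns Ts N T : Digr V) (ρN ρT : V) : Prop :=
  Ns.IsNetwork ∧ BinaryD Ns ∧ IsPhyloTree Ts ∧ Ts.leaves = Ns.leaves ∧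
    AttachRoot Ns ρN N ∧ AttachRoot Ts ρT T

/-! ### Stretch gadget (Definition 8, full version) -/

def UdomS (d : ℕ) : Set (ℕ × ℕ) :=
  {p | (2 ≤ p.1 ∧ p.1 ≤ d - 1 ∧ 1 ≤ p.2 ∧ p.2 ≤ p.1) ∨
    (p.1 = d ∧ 2 ≤ p.2 ∧ p.2 ≤ d - 1)}

def UPdomS (d : ℕ) : Set (ℕ × ℕ) :=
  {p | 3 ≤ p.1 ∧ p.1 ≤ d - 1 ∧ 2 ≤ p.2 ∧ p.2 ≤ p.1 - 1}

def WdomS (d : ℕ) : Set (ℕ × ℕ × ℕ) :=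
  {p | 1 ≤ p.1 ∧ p.1 ≤ d - 1 ∧ 1 ≤ p.2.1 ∧ p.2.1 ≤ d - 1 ∧ 1 ≤ p.2.2 ∧ p.2.2 ≤ 4}

/-- The arc set of the network obtained from `D` by stretching `v`. -/
def stretchArcs (D : Digr V) (v : V) (d : ℕ) (c : ℕ → V)
    (u u' : ℕ → ℕ → V) (w : ℕ → ℕ → ℕ → V) : Set (V × V) :=
  ((D.arcs : Set (V × V)) \ {a | a.1 = v}) ∪
  ({(v, u 2 1), (v, u 2 2)} : Set (V × V)) ∪
  {a | ∃ i, 2 ≤ i ∧ i ≤ d - 2 ∧ (a = (u i 1, u (i+1) 1) ∨ a = (u i 1, u (i+1) 2))} ∪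
  {a | ∃ i, 2 ≤ i ∧ i ≤ d - 2 ∧ (a = (u i i, u (i+1) i) ∨ a = (u i i, u (i+1) (i+1)))} ∪
  {a | ∃ i j, 3 ≤ i ∧ i ≤ d - 1 ∧ 2 ≤ j ∧ j ≤ i - 1 ∧ a = (u i j, u' i j)} ∪
  {a | ∃ i j, 3 ≤ i ∧ i ≤ d - 1 ∧ 2 ≤ j ∧ j ≤ i - 1 ∧
      (a = (u' i j, u (i+1) j) ∨ a = (u' i j, u (i+1) (j+1)))} ∪
  ({(u (d-1) 1, w 1 1 1), (u (d-1) 1, u d 2)} : Set (V × V)) ∪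
  ({(u (d-1) (d-1), u d (d-1)), (u (d-1) (d-1), w 1 (d-1) 2)} : Set (V × V)) ∪
  {a | ∃ j, 2 ≤ j ∧ j ≤ d - 1 ∧ a = (u d j, w 1 (j-1) 2)} ∪
  {a | ∃ i j, 1 ≤ i ∧ i ≤ d - 1 ∧ 1 ≤ j ∧ j ≤ d - 1 ∧
      (a = (w i j 1, w i j 3) ∨ a = (w i j 1, w i j 4) ∨
        a = (w i j 2, w i j 3) ∨ a = (w i j 2, w i j 4))} ∪
  {a | ∃ i j, 1 ≤ i ∧ i ≤ d - 1 ∧ 1 ≤ j ∧ j ≤ d - 2 ∧ a = (w i j 4, w i (j+1) 1)} ∪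
  {a | ∃ i, 1 ≤ i ∧ i ≤ d - 2 ∧ a = (w i 1 3, w (i+1) 1 1)} ∪
  {a | ∃ i, 1 ≤ i ∧ i ≤ d - 2 ∧ a = (w i (d-1) 4, w (i+1) (d-1) 2)} ∪
  {a | ∃ i j, 1 ≤ i ∧ i ≤ d - 2 ∧ 2 ≤ j ∧ j ≤ d - 1 ∧ a = (w i j 3, w (i+1) (j-1) 2)} ∪
  {a | ∃ j, 1 ≤ j ∧ j ≤ d - 1 ∧ a = (w (d-1) j 3, c j)} ∪
  {(w (d-1) (d-1) 4, c d)}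

/-- `D'` arises from `D` by stretching the vertex `v` (of out-degree `d ≥ 3`). -/
def StretchV (D : Digr V) (v : V) (D' : Digr V) : Prop :=
  ∃ (d : ℕ) (c : ℕ → V) (u u' : ℕ → ℕ → V) (w : ℕ → ℕ → ℕ → V),
    d = D.outDeg v ∧ 3 ≤ d ∧
    Set.BijOn c (Set.Icc 1 d) {x | (v, x) ∈ D.arcs} ∧
    Set.InjOn (fun p => u p.1 p.2) (UdomS d) ∧
    Set.InjOn (fun p => u' p.1 p.2) (UPdomS d) ∧
    Set.InjOn (fun p => w p.1 p.2.1 p.2.2) (WdomS d) ∧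
    (∀ p ∈ UdomS d, u p.1 p.2 ∉ D.verts) ∧
    (∀ p ∈ UPdomS d, u' p.1 p.2 ∉ D.verts) ∧
    (∀ p ∈ WdomS d, w p.1 p.2.1 p.2.2 ∉ D.verts) ∧
    (∀ p ∈ UdomS d, ∀ q ∈ UPdomS d, u p.1 p.2 ≠ u' q.1 q.2) ∧
    (∀ p ∈ UdomS d, ∀ q ∈ WdomS d, u p.1 p.2 ≠ w q.1 q.2.1 q.2.2) ∧
    (∀ p ∈ UPdomS d, ∀ q ∈ WdomS d, u' p.1 p.2 ≠ w q.1 q.2.1 q.2.2) ∧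
    ((D'.verts : Set V) =
      (D.verts : Set V) ∪ (fun p : ℕ × ℕ => u p.1 p.2) '' UdomS d ∪
        (fun p : ℕ × ℕ => u' p.1 p.2) '' UPdomS d ∪
        (fun p : ℕ × ℕ × ℕ => w p.1 p.2.1 p.2.2) '' WdomS d) ∧
    (D'.arcs : Set (V × V)) = stretchArcs D v d c u u' w

def StretchStep (D D' : Digr V) : Prop :=
  ∃ v ∈ D.verts, 3 ≤ D.outDeg v ∧ StretchV D v D'

/-- `N'` is `str(N)`: obtained by exhaustively stretching all vertices of
out-degree at least 3. -/
def IsStretch (N N' : Digr V) : Prop :=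
  Relation.ReflTransGen StretchStep N N' ∧ ∀ v ∈ N'.verts, N'.outDeg v ≤ 2

/-! ### Level -/

def underSG (D : Digr V) : SimpleGraph V :=
  SimpleGraph.fromRel fun a b => (a, b) ∈ D.arcs

/-- Two edges of the underlying graph lie in the same biconnected component. -/
def SameBlock (D : Digr V) (e f : Sym2 V) : Prop :=
  e = f ∨ ∃ (x : V) (wlk : (underSG D).Walk x x),
    wlk.IsCycle ∧ e ∈ wlk.edges ∧ f ∈ wlk.edges

def IsReticulation (D : Digr V) (v : V) : Prop := v ∈ D.verts ∧ 2 ≤ D.inDeg v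

/-- `D` has level at most `c`: each biconnected component of the underlying graph
contains at most `c` reticulations. -/
def LevelAtMost (D : Digr V) (c : ℕ) : Prop :=
  ∀ e ∈ (underSG D).edgeSet,
    {v | IsReticulation D v ∧
      ∃ f ∈ (underSG D).edgeSet, SameBlock D e f ∧ v ∈ f}.ncard ≤ c

end Digr

open Digr

namespace Digr

set_option linter.unusedSectionVars false

variable {V : Type} [DecidableEq V]

open Relation SimpleGraph Finset

open scoped Classical

/-- undirected adjacency within a finite vertex set -/
def wrel (N : Digr V) (X : Finset V) (p q : V) : Prop :=
  p ∈ X ∧ q ∈ X ∧ ((p, q) ∈ N.arcs ∨ (q, p) ∈ N.arcs)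

def ConnOn (N : Digr V) (X : Finset V) : Prop :=
  ∀ u ∈ X, ∀ v ∈ X, Relation.ReflTransGen (N.wrel X) u v

def ClosedOn (N : Digr V) (X : Finset V) : Prop :=
  ∀ f ∈ N.arcs, f.1 ∈ X → f.2 ∈ X

noncomputable def mm (N : Digr V) (v : V) : ℕ :=
  (N.verts.filter fun u => N.SReach u v).card

def cutF (N : Digr V) (X : Finset V) : Finset (V × V) :=
  N.arcs.filter fun f => f.1 ∉ X ∧ f.2 ∈ X

lemma wrel_symm (N : Digr V) (X : Finset V) : Symmetric (N.wrel X) := by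
  rintro p q ⟨h1, h2, h3⟩; exact ⟨h2, h1, h3.symm⟩

lemma rtg_symm {r : V → V → Prop} (hr : Symmetric r) {u v : V}
    (h : Relation.ReflTransGen r u v) : Relation.ReflTransGen r v u := by
  induction h with
  | refl => exact .refl
  | tail _ step ih => exact Relation.ReflTransGen.trans (Relation.ReflTransGen.single (hr step)) ih

lemma no_two_cycle (N : Digr V) (hacyc : N.Acyclic) {u v : V}
    (h1 : (u, v) ∈ N.arcs) (h2 : (v, u) ∈ N.arcs) : False :=
  hacyc u (Relation.TransGen.head h1 (Relation.TransGen.single h2))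

lemma arc_eq_of_sym2_eq (N : Digr V) (hacyc : N.Acyclic) {f g : V × V}
    (hf : f ∈ N.arcs) (hg : g ∈ N.arcs) (h : s(f.1, f.2) = s(g.1, g.2)) : f = g := by
  rcases Sym2.eq_iff.1 h with ⟨h1, h2⟩ | ⟨h1, h2⟩
  · exact Prod.ext h1 h2
  · exfalso
    apply N.no_two_cycle hacyc hf
    have : g = (f.2, f.1) := Prod.ext h2.symm h1.symm
    rwa [this] at hg

lemma mm_lt (N : Digr V) (hacyc : N.Acyclic) {u v : V} (h : (u, v) ∈ N.arcs) :
    N.mm u < N.mm v := by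
  apply Finset.card_lt_card
  constructor
  · intro x hx
    rw [Finset.mem_filter] at hx ⊢
    exact ⟨hx.1, hx.2.tail h⟩
  · intro hsub
    have hu : u ∈ N.verts.filter fun x => N.SReach x v :=
      Finset.mem_filter.2 ⟨(N.arc_mem _ h).1, Relation.TransGen.single h⟩
    have := Finset.mem_filter.1 (hsub hu)
    exact hacyc u this.2

lemma exists_parent (N : Digr V) {ρ : V} (huniq : ∀ y, N.IsRoot y → y = ρ)
    {v : V} (hv : v ∈ N.verts) (hne : v ≠ ρ) : ∃ u, (u, v) ∈ N.arcs := by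
  by_contra hno
  push_neg at hno
  have hdeg : N.inDeg v = 0 := by
    rw [inDeg, Finset.card_eq_zero]
    ext a
    simp only [Finset.mem_filter, Finset.notMem_empty, iff_false, not_and]
    intro ha h2
    exact hno a.1 (by rwa [show (a.1, v) = a from Prod.ext rfl h2.symm])
  exact hne (huniq v ⟨hv, hdeg⟩)

lemma reach_root (N : Digr V) (hacyc : N.Acyclic) {ρ : V}
    (huniq : ∀ y, N.IsRoot y → y = ρ) : ∀ v ∈ N.verts, N.Reach ρ v := by
  have H : ∀ n, ∀ v ∈ N.verts, N.mm v ≤ n → N.Reach ρ v := by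
    intro n
    induction n with
    | zero =>
      intro v hv hm
      rcases eq_or_ne v ρ with rfl | hne
      · exact Relation.ReflTransGen.refl
      · obtain ⟨u, hu⟩ := N.exists_parent huniq hv hne
        exact absurd (N.mm_lt hacyc hu) (by omega)
    | succ n ih =>
      intro v hv hm
      rcases eq_or_ne v ρ with rfl | hne
      · exact Relation.ReflTransGen.refl
      · obtain ⟨u, hu⟩ := N.exists_parent huniq hv hne
        have h1 := N.mm_lt hacyc hu
        exact (ih u (N.arc_mem _ hu).1 (by omega)).tail hu
  exact fun v hv => H (N.mm v) v hv le_rfl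

lemma conn_outside (N : Digr V) (hacyc : N.Acyclic) {ρ : V}
    (huniq : ∀ y, N.IsRoot y → y = ρ) (S : Finset V) (hcl : N.ClosedOn S) (hρ : ρ ∉ S) :
    ∀ u ∈ N.verts, u ∉ S → Relation.ReflTransGen (N.wrel (N.verts \ S)) ρ u := by
  have H : ∀ n, ∀ u ∈ N.verts, u ∉ S → N.mm u ≤ n →
      Relation.ReflTransGen (N.wrel (N.verts \ S)) ρ u := by
    intro n
    induction n with
    | zero =>
      intro u hu huS hm
      rcases eq_or_ne u ρ with rfl | hne
      · exact Relation.ReflTransGen.refl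
      · obtain ⟨w, hw⟩ := N.exists_parent huniq hu hne
        exact absurd (N.mm_lt hacyc hw) (by omega)
    | succ n ih =>
      intro u hu huS hm
      rcases eq_or_ne u ρ with rfl | hne
      · exact Relation.ReflTransGen.refl
      · obtain ⟨w, hw⟩ := N.exists_parent huniq hu hne
        have hwS : w ∉ S := fun hwS => huS (hcl _ hw hwS)
        have hwv : w ∈ N.verts := (N.arc_mem _ hw).1
        have h1 := N.mm_lt hacyc hw
        exact (ih w hwv hwS (by omega)).tail
          ⟨Finset.mem_sdiff.2 ⟨hwv, hwS⟩, Finset.mem_sdiff.2 ⟨hu, huS⟩, Or.inl hw⟩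
  exact fun u hu huS => H (N.mm u) u hu huS le_rfl

lemma span_bound (A : Finset (V × V)) (hA : ∀ f ∈ A, f.1 ≠ f.2) (X : Finset V) (x₀ : V)
    (hconn : ∀ x ∈ X, Relation.ReflTransGen (fun y z => (y, z) ∈ A ∨ (z, y) ∈ A) x x₀) :
    X.card ≤ A.card + 1 := by
  set G : SimpleGraph V := SimpleGraph.fromRel (fun y z => (y, z) ∈ A) with hG
  have hadj : ∀ {y z : V}, ((y, z) ∈ A ∨ (z, y) ∈ A) → G.Adj y z := by
    intro y z h
    rw [hG, SimpleGraph.fromRel_adj]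
    refine ⟨?_, h⟩
    rcases h with h | h
    · exact hA _ h
    · exact (hA _ h).symm
  have hrtg : ∀ {x y : V}, Relation.ReflTransGen (fun y z => (y, z) ∈ A ∨ (z, y) ∈ A) x y →
      G.Reachable x y := by
    intro x y h
    induction h with
    | refl => exact SimpleGraph.Reachable.refl _
    | tail _ step ih => exact ih.trans (hadj step).reachable
  have hreach : ∀ x ∈ X, G.Reachable x x₀ := fun x hx => hrtg (hconn x hx)
  -- map each non-root vertex to an edge towards x₀
  have key : ∀ x ∈ X.erase x₀, ∃ w, G.Adj x w ∧ G.dist w x₀ < G.dist x x₀ := by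
    intro x hx
    obtain ⟨hne, hxX⟩ := Finset.mem_erase.1 hx
    obtain ⟨p, hp⟩ := (hreach x hxX).exists_walk_length_eq_dist
    cases p with
    | nil => exact absurd rfl hne
    | @cons _ b _ h q =>
      refine ⟨b, h, ?_⟩
      have h1 := SimpleGraph.dist_le q
      rw [SimpleGraph.Walk.length_cons] at hp
      omega
  choose nb hnb hlt using key
  classical
  have hcard : (X.erase x₀).card ≤ (A.image fun f => s(f.1, f.2)).card := by
    apply Finset.card_le_card_of_injOn
      (fun x => if h : x ∈ X.erase x₀ then s(x, nb x h) else s(x, x))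
    · intro x hx
      have hx : x ∈ X.erase x₀ := hx
      simp only [hx, dif_pos]
      have := hnb x hx
      rw [hG, SimpleGraph.fromRel_adj] at this
      rcases this.2 with h | h
      · exact Finset.mem_image.2 ⟨(x, nb x hx), h, rfl⟩
      · exact Finset.mem_image.2 ⟨(nb x hx, x), h, Sym2.eq_swap⟩
    · intro x1 h1 x2 h2 heq
      simp only [Finset.mem_coe] at h1 h2
      simp only [h1, h2, dif_pos] at heq
      rcases Sym2.eq_iff.1 heq with ⟨ha, _⟩ | ⟨ha, hb⟩
      · exact ha
      · exfalso
        have l1 := hlt x1 h1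
        have l2 := hlt x2 h2
        have e1 := congrArg (fun t => G.dist t x₀) ha
        have e2 := congrArg (fun t => G.dist t x₀) hb
        omega
  have himg : (A.image fun f => s(f.1, f.2)).card ≤ A.card := Finset.card_image_le
  by_cases hx₀ : x₀ ∈ X
  · have := Finset.card_erase_of_mem hx₀
    omega
  · rw [Finset.erase_eq_of_notMem hx₀] at hcard
    omega

lemma underSG_adj_of_arc (N : Digr V) {u v : V} (h : (u, v) ∈ N.arcs) :
    (underSG N).Adj u v := by
  rw [underSG, SimpleGraph.fromRel_adj]
  exact ⟨(N.arc_mem _ h).2.2, Or.inl h⟩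

lemma walk_of_wrel (N : Digr V) {X : Finset V} {x y : V}
    (h : Relation.ReflTransGen (N.wrel X) x y) :
    ∃ w : (underSG N).Walk x y, ∀ e ∈ w.edges,
      ∃ f, f ∈ N.arcs ∧ e = s(f.1, f.2) ∧ f.1 ∈ X ∧ f.2 ∈ X := by
  induction h with
  | refl => exact ⟨SimpleGraph.Walk.nil, by simp⟩
  | @tail b c _ step ih =>
    obtain ⟨w, hw⟩ := ih
    have hadj : (underSG N).Adj b c := by
      rcases step.2.2 with h1 | h1
      · exact N.underSG_adj_of_arc h1
      · exact (N.underSG_adj_of_arc h1).symm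
    refine ⟨w.concat hadj, ?_⟩
    intro e he
    rw [SimpleGraph.Walk.edges_concat, List.concat_eq_append] at he
    rcases List.mem_append.1 he with he | he
    · exact hw e he
    · rw [List.mem_singleton] at he
      subst he
      rcases step.2.2 with h1 | h1
      · exact ⟨(b, c), h1, rfl, step.1, step.2.1⟩
      · exact ⟨(c, b), h1, Sym2.eq_swap, step.2.1, step.1⟩

lemma crossing_edge (N : Digr V) (S : Finset V) (a₀ : V × V) :
    ∀ {x y : V} (w : (underSG N).Walk x y),
      (∀ e ∈ w.edges, ∃ f, f ∈ N.arcs ∧ e = s(f.1, f.2) ∧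
        ((f.1 ∈ S ∧ f.2 ∈ S) ∨ (f.1 ∉ S ∧ f.2 ∉ S) ∨ f = a₀)) →
      x ∈ S → y ∉ S → s(a₀.1, a₀.2) ∈ w.edges := by
  intro x y w
  induction w with
  | nil => intro _ hx hy; exact absurd hx hy
  | @cons u b y h q ih =>
    intro hPROP hx hy
    by_cases hb : b ∈ S
    · have := ih (fun e he => hPROP e (List.mem_cons_of_mem _ he)) hb hy
      exact List.mem_cons_of_mem _ this
    · obtain ⟨f, hf, hfe, hside⟩ := hPROP s(u, b) (List.mem_cons_self)
      rcases hside with ⟨h1, h2⟩ | ⟨h1, h2⟩ | h1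
      · exfalso
        rcases Sym2.eq_iff.1 hfe with ⟨e1, e2⟩ | ⟨e1, e2⟩
        · exact hb (by rw [e2]; exact h2)
        · exact hb (by rw [e2]; exact h1)
      · exfalso
        rcases Sym2.eq_iff.1 hfe with ⟨e1, e2⟩ | ⟨e1, e2⟩
        · exact h1 (by rw [← e1]; exact hx)
        · exact h2 (by rw [← e1]; exact hx)
      · subst h1
        rw [← hfe]
        exact List.mem_cons_self

lemma support_conn {G : SimpleGraph V} : ∀ {x y : V} (w : G.Walk x y), ∀ z ∈ w.support,
    Relation.ReflTransGen (fun p q => s(p, q) ∈ w.edges) x z := by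
  intro x y w
  induction w with
  | nil =>
    intro z hz
    rw [SimpleGraph.Walk.support_nil, List.mem_singleton] at hz
    subst hz; exact Relation.ReflTransGen.refl
  | @cons u b y h q ih =>
    intro z hz
    rw [SimpleGraph.Walk.support_cons] at hz
    rcases List.mem_cons.1 hz with rfl | hz
    · exact Relation.ReflTransGen.refl
    · have h1 := ih z hz
      have h2 : Relation.ReflTransGen
          (fun p r => s(p, r) ∈ (SimpleGraph.Walk.cons h q).edges) b z :=
        Relation.ReflTransGen.mono (fun p r hpr => by
          rw [SimpleGraph.Walk.edges_cons]; exact List.mem_cons_of_mem _ hpr) _ _ h1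
      exact Relation.ReflTransGen.head
        (by rw [SimpleGraph.Walk.edges_cons]; exact List.mem_cons_self) h2

lemma key_cut_bound (N : Digr V) (c : ℕ) (hacyc : N.Acyclic) (hbin : BinaryD N)
    {ρ : V} (huniq : ∀ y, N.IsRoot y → y = ρ)
    (hlev : LevelAtMost N c)
    (S : Finset V) (hcl : N.ClosedOn S) (hconn : N.ConnOn S)
    (hρ : ρ ∉ S) :
    (N.cutF S).card ≤ c + 1 := by
  by_cases hk : (N.cutF S).card ≤ 1
  · omega
  push_neg at hk
  obtain ⟨a₀, ha₀⟩ : (N.cutF S).Nonempty := Finset.card_pos.1 (by omega)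
  have ha₀arc : a₀ ∈ N.arcs := (Finset.mem_filter.1 ha₀).1
  have ha₀1 : a₀.1 ∉ S := (Finset.mem_filter.1 ha₀).2.1
  have ha₀2 : a₀.2 ∈ S := (Finset.mem_filter.1 ha₀).2.2
  set KE := (N.cutF S).erase a₀ with hKE
  have hPex : ∀ a ∈ KE, ∃ p : (underSG N).Walk a.2 a.1, p.IsPath ∧
      s(a₀.1, a₀.2) ∈ p.edges ∧ s(a.1, a.2) ∉ p.edges ∧
      (∀ e ∈ p.edges, ∃ f, f ∈ N.arcs ∧ e = s(f.1, f.2) ∧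
        ((f.1 ∈ S ∧ f.2 ∈ S) ∨ (f.1 ∉ S ∧ f.2 ∉ S) ∨ f = a₀)) := by
    intro a ha
    have hane : a ≠ a₀ := (Finset.mem_erase.1 ha).1
    have haK := (Finset.mem_erase.1 ha).2
    have haarc : a ∈ N.arcs := (Finset.mem_filter.1 haK).1
    have ha1 : a.1 ∉ S := (Finset.mem_filter.1 haK).2.1
    have ha2 : a.2 ∈ S := (Finset.mem_filter.1 haK).2.2
    obtain ⟨w1, hw1⟩ := N.walk_of_wrel (hconn a.2 ha2 a₀.2 ha₀2)
    have hO1 := N.conn_outside hacyc huniq S hcl hρ a₀.1 (N.arc_mem _ ha₀arc).1 ha₀1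
    have hO2 := N.conn_outside hacyc huniq S hcl hρ a.1 (N.arc_mem _ haarc).1 ha1
    obtain ⟨w2, hw2⟩ := N.walk_of_wrel ((rtg_symm (N.wrel_symm _) hO1).trans hO2)
    have hmadj : (underSG N).Adj a₀.2 a₀.1 :=
      (N.underSG_adj_of_arc (by rwa [Prod.mk.eta])).symm
    set wfull := w1.append (SimpleGraph.Walk.cons hmadj w2) with hwfull
    have hPROP : ∀ e ∈ wfull.edges, ∃ f, f ∈ N.arcs ∧ e = s(f.1, f.2) ∧
        ((f.1 ∈ S ∧ f.2 ∈ S) ∨ (f.1 ∉ S ∧ f.2 ∉ S) ∨ f = a₀) := by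
      intro e he
      rw [hwfull, SimpleGraph.Walk.edges_append, SimpleGraph.Walk.edges_cons] at he
      rcases List.mem_append.1 he with he | he
      · obtain ⟨f, hf, hfe, h1, h2⟩ := hw1 e he
        exact ⟨f, hf, hfe, Or.inl ⟨h1, h2⟩⟩
      · rcases List.mem_cons.1 he with rfl | he
        · exact ⟨a₀, ha₀arc, Sym2.eq_swap, Or.inr (Or.inr rfl)⟩
        · obtain ⟨f, hf, hfe, h1, h2⟩ := hw2 e he
          exact ⟨f, hf, hfe, Or.inr (Or.inl
            ⟨(Finset.mem_sdiff.1 h1).2, (Finset.mem_sdiff.1 h2).2⟩)⟩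
    have hsubE := SimpleGraph.Walk.edges_bypass_subset wfull
    have hPROPb : ∀ e ∈ wfull.bypass.edges, ∃ f, f ∈ N.arcs ∧ e = s(f.1, f.2) ∧
        ((f.1 ∈ S ∧ f.2 ∈ S) ∨ (f.1 ∉ S ∧ f.2 ∉ S) ∨ f = a₀) :=
      fun e he => hPROP e (hsubE he)
    have hcross : s(a₀.1, a₀.2) ∈ wfull.bypass.edges :=
      N.crossing_edge S a₀ wfull.bypass hPROPb ha2 ha1
    have hnot : s(a.1, a.2) ∉ wfull.bypass.edges := by
      intro hmem
      obtain ⟨f, hf, hfe, hside⟩ := hPROPb _ hmem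
      have hfa : (a.1, a.2) = f := N.arc_eq_of_sym2_eq hacyc (by rwa [Prod.mk.eta]) hf hfe
      rw [Prod.mk.eta] at hfa
      subst hfa
      rcases hside with ⟨h1, _⟩ | ⟨_, h2⟩ | h1
      · exact ha1 h1
      · exact h2 ha2
      · exact hane h1
    exact ⟨wfull.bypass, SimpleGraph.Walk.bypass_isPath _, hcross, hnot, hPROPb⟩
  choose P hPpath hPe0 hPno hPprop using hPex
  have hcycedge : ∀ (a : V × V) (ha : a ∈ KE) (f : Sym2 V),
      (f ∈ (P a ha).edges ∨ f = s(a.1, a.2)) → SameBlock N s(a₀.1, a₀.2) f := by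
    intro a ha f hf
    have haarc : a ∈ N.arcs := (Finset.mem_filter.1 (Finset.mem_erase.1 ha).2).1
    have hadj : (underSG N).Adj a.1 a.2 := N.underSG_adj_of_arc (by rwa [Prod.mk.eta])
    have hC : (SimpleGraph.Walk.cons hadj
        ((⟨P a ha, hPpath a ha⟩ : (underSG N).Path a.2 a.1) :
          (underSG N).Walk a.2 a.1)).IsCycle :=
      SimpleGraph.Path.cons_isCycle _ hadj (hPno a ha)
    refine Or.inr ⟨a.1, _, hC, ?_, ?_⟩
    · rw [SimpleGraph.Walk.edges_cons]
      exact List.mem_cons_of_mem _ (hPe0 a ha)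
    · rw [SimpleGraph.Walk.edges_cons]
      rcases hf with hf | rfl
      · exact List.mem_cons_of_mem _ hf
      · exact List.mem_cons_self
  set F2 : Finset (V × V) := N.arcs.filter
    (fun f => ∃ (a : V × V) (ha : a ∈ KE), s(f.1, f.2) ∈ (P a ha).edges) with hF2
  set A' := F2 ∪ KE with hA'def
  have hKEcard : KE.card = (N.cutF S).card - 1 := Finset.card_erase_of_mem ha₀
  have hKEne : KE.Nonempty := Finset.card_pos.1 (by omega)
  obtain ⟨a₁, ha₁⟩ := hKEne
  have ha₀F2 : a₀ ∈ F2 := Finset.mem_filter.2 ⟨ha₀arc, ⟨a₁, ha₁, hPe0 a₁ ha₁⟩⟩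
  have hA'sub : ∀ f ∈ A', f ∈ N.arcs := by
    intro f hf
    rcases Finset.mem_union.1 hf with hf | hf
    · exact (Finset.mem_filter.1 hf).1
    · exact (Finset.mem_filter.1 (Finset.mem_erase.1 hf).2).1
  have hdisj : Disjoint F2 KE := by
    rw [Finset.disjoint_left]
    intro f hfF hfK
    obtain ⟨a, ha, hmem⟩ := (Finset.mem_filter.1 hfF).2
    obtain ⟨g, hg, hge, hside⟩ := hPprop a ha _ hmem
    have hfg : f = g := N.arc_eq_of_sym2_eq hacyc (Finset.mem_filter.1 hfF).1 hg hge
    subst hfg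
    have hf1 : f.1 ∉ S := (Finset.mem_filter.1 (Finset.mem_erase.1 hfK).2).2.1
    have hf2 : f.2 ∈ S := (Finset.mem_filter.1 (Finset.mem_erase.1 hfK).2).2.2
    rcases hside with ⟨h1, _⟩ | ⟨_, h2⟩ | h1
    · exact hf1 h1
    · exact h2 hf2
    · exact (Finset.mem_erase.1 hfK).1 h1
  set V' := A'.biUnion (fun f => {f.1, f.2}) with hV'def
  have hV'sub : ∀ v ∈ V', v ∈ N.verts := by
    intro v hv
    obtain ⟨f, hf, hvf⟩ := Finset.mem_biUnion.1 hv
    rcases Finset.mem_insert.1 hvf with rfl | hvf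
    · exact (N.arc_mem _ (hA'sub _ hf)).1
    · rw [Finset.mem_singleton] at hvf
      subst hvf
      exact (N.arc_mem _ (hA'sub _ hf)).2.1
  have hconnV : ∀ x ∈ V', Relation.ReflTransGen
      (fun y z => (y, z) ∈ F2 ∨ (z, y) ∈ F2) x a₀.2 := by
    intro x hx
    have hsupp : ∃ (a : V × V) (ha : a ∈ KE), x ∈ (P a ha).support := by
      obtain ⟨f, hf, hxf⟩ := Finset.mem_biUnion.1 hx
      rcases Finset.mem_union.1 hf with hfF | hfK
      · obtain ⟨a, ha, hmem⟩ := (Finset.mem_filter.1 hfF).2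
        rcases Finset.mem_insert.1 hxf with rfl | hxf
        · exact ⟨a, ha, SimpleGraph.Walk.fst_mem_support_of_mem_edges _ hmem⟩
        · rw [Finset.mem_singleton] at hxf
          subst hxf
          exact ⟨a, ha, SimpleGraph.Walk.snd_mem_support_of_mem_edges _ hmem⟩
      · rcases Finset.mem_insert.1 hxf with rfl | hxf
        · exact ⟨f, hfK, SimpleGraph.Walk.end_mem_support _⟩
        · rw [Finset.mem_singleton] at hxf
          subst hxf
          exact ⟨f, hfK, SimpleGraph.Walk.start_mem_support _⟩
    obtain ⟨a, ha, hxs⟩ := hsupp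
    have h2 : a₀.2 ∈ (P a ha).support :=
      SimpleGraph.Walk.snd_mem_support_of_mem_edges _ (hPe0 a ha)
    have c1 := support_conn (P a ha) x hxs
    have c2 := support_conn (P a ha) a₀.2 h2
    have hsymm : Symmetric (fun p q => s(p, q) ∈ (P a ha).edges) := by
      intro p q h
      rwa [Sym2.eq_swap]
    have c3 := (rtg_symm hsymm c1).trans c2
    refine Relation.ReflTransGen.mono ?_ _ _ c3
    intro y z hyz
    obtain ⟨g, hg, hge, _⟩ := hPprop a ha _ hyz
    have hgF : g ∈ F2 := Finset.mem_filter.2 ⟨hg, ⟨a, ha, by rw [← hge]; exact hyz⟩⟩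
    rcases Sym2.eq_iff.1 hge with ⟨e1, e2⟩ | ⟨e1, e2⟩
    · left
      have : (y, z) = g := Prod.ext e1 e2
      rwa [this]
    · right
      have : (z, y) = g := Prod.ext e2 e1
      rwa [this]
  have hspan : V'.card ≤ F2.card + 1 :=
    span_bound F2 (fun f hf => (N.arc_mem _ (Finset.mem_filter.1 hf).1).2.2) V' a₀.2 hconnV
  have hcardA' : A'.card = F2.card + KE.card := Finset.card_union_of_disjoint hdisj
  have hsum : A'.card = ∑ v ∈ V', (A'.filter fun f => f.2 = v).card :=
    Finset.card_eq_sum_card_fiberwise (fun f hf => Finset.mem_biUnion.2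
      ⟨f, hf, by simp⟩)
  have hV'ne : V'.Nonempty := ⟨a₀.1, Finset.mem_biUnion.2
    ⟨a₀, Finset.mem_union.2 (Or.inl ha₀F2), by simp⟩⟩
  obtain ⟨vmin, hvmin, hmin⟩ := Finset.exists_min_image V' N.mm hV'ne
  have hdeg0 : (A'.filter fun f => f.2 = vmin).card = 0 := by
    rw [Finset.card_eq_zero, Finset.filter_eq_empty_iff]
    rintro f hf rfl
    have h1 := N.mm_lt hacyc (by rw [Prod.mk.eta]; exact hA'sub _ hf)
    have hf1 : f.1 ∈ V' := Finset.mem_biUnion.2 ⟨f, hf, by simp⟩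
    have := hmin f.1 hf1
    omega
  have hdeg2 : ∀ v ∈ V', (A'.filter fun f => f.2 = v).card ≤ 2 := by
    intro v hv
    have h1 : (A'.filter fun f => f.2 = v).card ≤ (N.arcs.filter fun f => f.2 = v).card :=
      Finset.card_le_card (Finset.filter_subset_filter _ (fun f hf => hA'sub f hf))
    exact le_trans h1 (hbin v (hV'sub v hv)).1
  set M := V'.filter (fun v => 2 ≤ (A'.filter fun f => f.2 = v).card) with hMdef
  have hbound : A'.card ≤ V'.card - 1 + M.card := by
    have h1 : A'.card = ∑ v ∈ V'.erase vmin, (A'.filter fun f => f.2 = v).card := by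
      rw [hsum, ← Finset.add_sum_erase _ _ hvmin, hdeg0, zero_add]
    have h2 : ∀ v ∈ V'.erase vmin, (A'.filter fun f => f.2 = v).card ≤
        1 + (if 2 ≤ (A'.filter fun f => f.2 = v).card then 1 else 0) := by
      intro v hv
      have := hdeg2 v (Finset.mem_of_mem_erase hv)
      split <;> omega
    have h3 := Finset.sum_le_sum h2
    rw [Finset.sum_add_distrib, Finset.sum_const, smul_eq_mul, mul_one,
      Finset.sum_boole] at h3
    have h4 : (V'.erase vmin).filter (fun v => 2 ≤ (A'.filter fun f => f.2 = v).card)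
        = M := by
      rw [hMdef, Finset.filter_erase]
      apply Finset.erase_eq_of_notMem
      intro hmem
      have := (Finset.mem_filter.1 hmem).2
      omega
    rw [h4] at h3
    have h5 : (V'.erase vmin).card = V'.card - 1 := Finset.card_erase_of_mem hvmin
    have h6 : (M.card : ℕ) = M.card := rfl
    rw [h5] at h3
    rw [h1]
    exact_mod_cast h3
  have hMZ : ∀ v ∈ M, v ∈ {v | IsReticulation N v ∧
      ∃ f ∈ (underSG N).edgeSet, SameBlock N s(a₀.1, a₀.2) f ∧ v ∈ f} := by
    intro v hv
    have hvV : v ∈ V' := (Finset.mem_filter.1 hv).1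
    have h2le := (Finset.mem_filter.1 hv).2
    obtain ⟨g1, hg1, g2, hg2, hgne⟩ := Finset.one_lt_card.1
      (by omega : 1 < (A'.filter fun f => f.2 = v).card)
    have hret : IsReticulation N v := by
      refine ⟨hV'sub v hvV, ?_⟩
      have hsub2 : ({g1, g2} : Finset (V × V)) ⊆ N.arcs.filter (fun a => a.2 = v) := by
        intro g hg
        rcases Finset.mem_insert.1 hg with rfl | hg
        · exact Finset.mem_filter.2 ⟨hA'sub _ (Finset.mem_filter.1 hg1).1,
            (Finset.mem_filter.1 hg1).2⟩
        · rw [Finset.mem_singleton] at hg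
          subst hg
          exact Finset.mem_filter.2 ⟨hA'sub _ (Finset.mem_filter.1 hg2).1,
            (Finset.mem_filter.1 hg2).2⟩
      calc (2 : ℕ) = ({g1, g2} : Finset (V × V)).card := (Finset.card_pair hgne).symm
        _ ≤ _ := Finset.card_le_card hsub2
    have hg1A : g1 ∈ A' := (Finset.mem_filter.1 hg1).1
    have hg1arc : g1 ∈ N.arcs := hA'sub _ hg1A
    have hg1v : g1.2 = v := (Finset.mem_filter.1 hg1).2
    have hedge : s(g1.1, g1.2) ∈ (underSG N).edgeSet := by
      rw [SimpleGraph.mem_edgeSet]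
      exact N.underSG_adj_of_arc (by rwa [Prod.mk.eta])
    have hblock : SameBlock N s(a₀.1, a₀.2) s(g1.1, g1.2) := by
      rcases Finset.mem_union.1 hg1A with hf | hf
      · obtain ⟨a, ha, hmem⟩ := (Finset.mem_filter.1 hf).2
        exact hcycedge a ha _ (Or.inl hmem)
      · exact hcycedge g1 hf _ (Or.inr rfl)
    refine ⟨hret, s(g1.1, g1.2), hedge, hblock, ?_⟩
    rw [Sym2.mem_iff]
    exact Or.inr hg1v.symm
  have hMcard : M.card ≤ {v | IsReticulation N v ∧
      ∃ f ∈ (underSG N).edgeSet, SameBlock N s(a₀.1, a₀.2) f ∧ v ∈ f}.ncard := by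
    have hsub3 : (↑M : Set V) ⊆ {v | IsReticulation N v ∧
        ∃ f ∈ (underSG N).edgeSet, SameBlock N s(a₀.1, a₀.2) f ∧ v ∈ f} :=
      fun v hv => hMZ v hv
    have hfin : {v | IsReticulation N v ∧
        ∃ f ∈ (underSG N).edgeSet, SameBlock N s(a₀.1, a₀.2) f ∧ v ∈ f}.Finite :=
      Set.Finite.subset (N.verts.finite_toSet) (fun v hv => hv.1.1)
    calc M.card = (↑M : Set V).ncard := (Set.ncard_coe_finset M).symm
      _ ≤ _ := Set.ncard_le_ncard hsub3 hfin
  have hlevZ := hlev (s(a₀.1, a₀.2)) (by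
    rw [SimpleGraph.mem_edgeSet]
    exact N.underSG_adj_of_arc (by rwa [Prod.mk.eta]))
  omega

noncomputable def Dset (E : Finset (V × V)) (S : Finset V) (t : V) : Finset V :=
  S.filter (fun v => Relation.ReflTransGen (fun p q => (p, q) ∈ E) t v)

structure TreeOn (N : Digr V) (S : Finset V) (E : Finset (V × V)) (r : V) : Prop where
  root_mem : r ∈ S
  ends : ∀ f ∈ E, f.1 ∈ S ∧ f.2 ∈ S ∧ f.1 ≠ f.2
  reach : ∀ v ∈ S, Relation.ReflTransGen (fun p q => (p, q) ∈ E) r v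
  indeg : ∀ v, (E.filter fun f => f.2 = v).card ≤ 1
  rootdeg : (E.filter fun f => f.2 = r).card = 0
  acyc : ∀ v, ¬ Relation.TransGen (fun p q => (p, q) ∈ E) v v
  desc : ∀ f ∈ N.arcs, f.1 ∈ S → Relation.TransGen (fun p q => (p, q) ∈ E) f.1 f.2
  canon : ∀ t ∈ S, N.ConnOn (Dset E S t)

lemma build (N : Digr V) (hacyc : N.Acyclic) :
    ∀ n (S : Finset V), S.card ≤ n → S.Nonempty → N.ClosedOn S → N.ConnOn S →
      ∃ E r, TreeOn N S E r := by
  intro n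
  induction n with
  | zero =>
    intro S hcard hne _ _
    have := Finset.card_pos.2 hne
    omega
  | succ n ih =>
    intro S hcard hne hcl hconn
    obtain ⟨r, hr, hrmin⟩ := Finset.exists_min_image S N.mm hne
    have hrmax : ∀ f ∈ N.arcs, f.1 ∈ S → f.2 ≠ r := by
      intro f hf h1 h2
      have h3 := N.mm_lt hacyc (show (f.1, f.2) ∈ N.arcs by rwa [Prod.mk.eta])
      rw [h2] at h3
      have h4 := hrmin f.1 h1
      omega
    set X := S.erase r with hX
    have hrX : r ∉ X := Finset.notMem_erase r S
    set comp : V → Finset V :=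
      fun v => X.filter (fun w => Relation.ReflTransGen (N.wrel X) v w) with hcompdef
    have hcompself : ∀ v ∈ X, v ∈ comp v :=
      fun v hv => Finset.mem_filter.2 ⟨hv, Relation.ReflTransGen.refl⟩
    have hcompsub : ∀ v, comp v ⊆ X := fun v => Finset.filter_subset _ _
    have hcompeq : ∀ v ∈ X, ∀ w ∈ comp v, comp w = comp v := by
      intro v hv w hw
      have hvw : Relation.ReflTransGen (N.wrel X) v w := (Finset.mem_filter.1 hw).2
      ext z
      simp only [hcompdef, Finset.mem_filter]
      constructor
      · rintro ⟨hz, hwz⟩; exact ⟨hz, hvw.trans hwz⟩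
      · rintro ⟨hz, hvz⟩; exact ⟨hz, (rtg_symm (N.wrel_symm X) hvw).trans hvz⟩
    have hstrength : ∀ (v : V), v ∈ X → ∀ {u w : V}, Relation.ReflTransGen (N.wrel X) u w →
        u ∈ comp v → Relation.ReflTransGen (N.wrel (comp v)) u w := by
      intro v hv u w h
      induction h using Relation.ReflTransGen.head_induction_on with
      | refl => intro _; exact Relation.ReflTransGen.refl
      | @head a b step rest ih2 =>
        intro ha
        have hb : b ∈ comp a := Finset.mem_filter.2 ⟨step.2.1, Relation.ReflTransGen.single step⟩
        rw [hcompeq v hv a ha] at hb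
        exact Relation.ReflTransGen.head ⟨ha, hb, step.2.2⟩ (ih2 hb)
    have hcompconn : ∀ v ∈ X, N.ConnOn (comp v) := by
      intro v hv u hu w hw
      have h1 : Relation.ReflTransGen (N.wrel X) u w :=
        (rtg_symm (N.wrel_symm X) (Finset.mem_filter.1 hu).2).trans (Finset.mem_filter.1 hw).2
      exact hstrength v hv h1 hu
    have hcompcl : ∀ v ∈ X, N.ClosedOn (comp v) := by
      intro v hv f hf h1
      have hf1X : f.1 ∈ X := hcompsub v h1
      have hf1S : f.1 ∈ S := Finset.mem_of_mem_erase hf1X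
      have hf2S : f.2 ∈ S := hcl f hf hf1S
      have hf2X : f.2 ∈ X := Finset.mem_erase.2 ⟨hrmax f hf hf1S, hf2S⟩
      have h2 : f.2 ∈ comp f.1 := Finset.mem_filter.2
        ⟨hf2X, Relation.ReflTransGen.single ⟨hf1X, hf2X, Or.inl (by rwa [Prod.mk.eta])⟩⟩
      rwa [hcompeq v hv f.1 h1] at h2
    set CS := X.image comp with hCS
    have hIH : ∀ K ∈ CS, ∃ E r', TreeOn N K E r' := by
      intro K hK
      obtain ⟨v, hv, hKv⟩ := Finset.mem_image.1 hK
      subst hKv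
      have hXcard : X.card = S.card - 1 := Finset.card_erase_of_mem hr
      have hSpos := Finset.card_pos.2 hne
      have hKcard : (comp v).card ≤ n := by
        have := Finset.card_le_card (hcompsub v)
        omega
      exact ih (comp v) hKcard ⟨v, hcompself v hv⟩ (hcompcl v hv) (hcompconn v hv)
    choose Et rt hTree using hIH
    set E := CS.attach.biUnion (fun K => insert (r, rt K.1 K.2) (Et K.1 K.2)) with hE
    have hEt_sub : ∀ K (hK : K ∈ CS), Et K hK ⊆ E := by
      intro K hK f hf
      exact Finset.mem_biUnion.2 ⟨⟨K, hK⟩, Finset.mem_attach _ _,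
        Finset.mem_insert.2 (Or.inr hf)⟩
    have hroot_arc : ∀ K (hK : K ∈ CS), (r, rt K hK) ∈ E := by
      intro K hK
      exact Finset.mem_biUnion.2 ⟨⟨K, hK⟩, Finset.mem_attach _ _, Finset.mem_insert_self _ _⟩
    have hEmem : ∀ f ∈ E, ∃ K, ∃ hK : K ∈ CS, f = (r, rt K hK) ∨ f ∈ Et K hK := by
      intro f hf
      obtain ⟨⟨K, hK⟩, _, hm⟩ := Finset.mem_biUnion.1 hf
      exact ⟨K, hK, Finset.mem_insert.1 hm⟩
    have hKX : ∀ K ∈ CS, K ⊆ X := by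
      intro K hK
      obtain ⟨v, _, hKv⟩ := Finset.mem_image.1 hK
      subst hKv
      exact hcompsub v
    have hKcompof : ∀ K (hK : K ∈ CS), ∀ w ∈ K, K = comp w := by
      intro K hK w hw
      obtain ⟨v, hv, hKv⟩ := Finset.mem_image.1 hK
      subst hKv
      exact (hcompeq v hv w hw).symm
    have hrtK : ∀ K (hK : K ∈ CS), rt K hK ∈ K := fun K hK => (hTree K hK).root_mem
    have hheads : ∀ f ∈ E, f.2 ∈ X := by
      intro f hf
      obtain ⟨K, hK, h | h⟩ := hEmem f hf
      · rw [h]; exact hKX K hK (hrtK K hK)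
      · exact hKX K hK ((hTree K hK).ends f h).2.1
    have hheadK : ∀ f ∈ E, ∀ K (hK : K ∈ CS), f.2 ∈ K → f = (r, rt K hK) ∨ f ∈ Et K hK := by
      intro f hf K hK hfK
      obtain ⟨K', hK', h | h⟩ := hEmem f hf
      · have h2 : f.2 ∈ K' := by rw [h]; exact hrtK K' hK'
        have e1 : K' = comp f.2 := hKcompof K' hK' f.2 h2
        have e2 : K = comp f.2 := hKcompof K hK f.2 hfK
        obtain rfl : K' = K := e1.trans e2.symm
        exact Or.inl h
      · have h2 : f.2 ∈ K' := ((hTree K' hK').ends f h).2.1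
        have e1 : K' = comp f.2 := hKcompof K' hK' f.2 h2
        have e2 : K = comp f.2 := hKcompof K hK f.2 hfK
        obtain rfl : K' = K := e1.trans e2.symm
        exact Or.inr h
    have htailK : ∀ f ∈ E, ∀ K (hK : K ∈ CS), f.1 ∈ K → f ∈ Et K hK := by
      intro f hf K hK hfK
      obtain ⟨K', hK', h | h⟩ := hEmem f hf
      · exfalso
        apply hrX
        have : f.1 = r := by rw [h]
        rw [← this]
        exact hKX K hK hfK
      · have h2 : f.1 ∈ K' := ((hTree K' hK').ends f h).1
        have e1 : K' = comp f.1 := hKcompof K' hK' f.1 h2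
        have e2 : K = comp f.1 := hKcompof K hK f.1 hfK
        obtain rfl : K' = K := e1.trans e2.symm
        exact h
    have hliftR : ∀ K (hK : K ∈ CS), ∀ {v w : V},
        Relation.ReflTransGen (fun p q => (p, q) ∈ E) v w → v ∈ K →
        w ∈ K ∧ Relation.ReflTransGen (fun p q => (p, q) ∈ Et K hK) v w := by
      intro K hK v w h
      induction h with
      | refl => intro hv; exact ⟨hv, Relation.ReflTransGen.refl⟩
      | @tail b c hvb hbc ih2 =>
        intro hv
        obtain ⟨hbK, hrt⟩ := ih2 hv
        have h3 := htailK _ hbc K hK hbK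
        exact ⟨((hTree K hK).ends _ h3).2.1, hrt.tail h3⟩
    have hliftT : ∀ K (hK : K ∈ CS), ∀ {v w : V},
        Relation.TransGen (fun p q => (p, q) ∈ E) v w → v ∈ K →
        w ∈ K ∧ Relation.TransGen (fun p q => (p, q) ∈ Et K hK) v w := by
      intro K hK v w h
      induction h with
      | single h1 =>
        intro hv
        have h2 := htailK _ h1 K hK hv
        exact ⟨((hTree K hK).ends _ h2).2.1, Relation.TransGen.single h2⟩
      | tail h1 h2 ih2 =>
        intro hv
        obtain ⟨hbK, ht⟩ := ih2 hv
        have h3 := htailK _ h2 K hK hbK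
        exact ⟨((hTree K hK).ends _ h3).2.1, ht.tail h3⟩
    refine ⟨E, r, ?_, ?_, ?_, ?_, ?_, ?_, ?_, ?_⟩
    · exact hr
    · -- ends
      intro f hf
      obtain ⟨K, hK, h | h⟩ := hEmem f hf
      · have h1 : rt K hK ∈ X := hKX K hK (hrtK K hK)
        refine ⟨by rw [h]; exact hr, by rw [h]; exact Finset.mem_of_mem_erase h1, ?_⟩
        rw [h]
        intro heq
        simp only at heq
        exact hrX (heq ▸ h1)
      · obtain ⟨h1, h2, h3⟩ := (hTree K hK).ends f h
        exact ⟨Finset.mem_of_mem_erase (hKX K hK h1),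
          Finset.mem_of_mem_erase (hKX K hK h2), h3⟩
    · -- reach
      intro v hv
      rcases eq_or_ne v r with rfl | hvr
      · exact Relation.ReflTransGen.refl
      · have hvX : v ∈ X := Finset.mem_erase.2 ⟨hvr, hv⟩
        have hK : comp v ∈ CS := Finset.mem_image_of_mem comp hvX
        have h1 := (hTree (comp v) hK).reach v (hcompself v hvX)
        have h2 : Relation.ReflTransGen (fun p q => (p, q) ∈ E) (rt (comp v) hK) v :=
          Relation.ReflTransGen.mono (fun p q hpq => hEt_sub (comp v) hK hpq) _ _ h1
        exact Relation.ReflTransGen.head (hroot_arc (comp v) hK) h2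
    · -- indeg
      intro v
      by_cases hvX : v ∈ X
      · have hK : comp v ∈ CS := Finset.mem_image_of_mem comp hvX
        by_cases hvrt : v = rt (comp v) hK
        · have hsub : E.filter (fun f => f.2 = v) ⊆ {(r, rt (comp v) hK)} := by
            intro f hf
            obtain ⟨hfE, hfv⟩ := Finset.mem_filter.1 hf
            have hfK : f.2 ∈ comp v := by rw [hfv]; exact hcompself v hvX
            rcases hheadK f hfE (comp v) hK hfK with h | h
            · rw [Finset.mem_singleton]; exact h
            · exfalso
              have h0 := (hTree (comp v) hK).rootdeg
              rw [Finset.card_eq_zero] at h0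
              have : f ∈ (Et (comp v) hK).filter (fun f => f.2 = rt (comp v) hK) :=
                Finset.mem_filter.2 ⟨h, hfv.trans hvrt⟩
              rw [h0] at this
              exact absurd this (Finset.notMem_empty f)
          calc (E.filter (fun f => f.2 = v)).card ≤ _ := Finset.card_le_card hsub
            _ ≤ 1 := by simp
        · have hsub : E.filter (fun f => f.2 = v) ⊆
              (Et (comp v) hK).filter (fun f => f.2 = v) := by
            intro f hf
            obtain ⟨hfE, hfv⟩ := Finset.mem_filter.1 hf
            have hfK : f.2 ∈ comp v := by rw [hfv]; exact hcompself v hvX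
            rcases hheadK f hfE (comp v) hK hfK with h | h
            · exact absurd (hfv.symm.trans (congrArg Prod.snd h)) hvrt
            · exact Finset.mem_filter.2 ⟨h, hfv⟩
          exact le_trans (Finset.card_le_card hsub) ((hTree (comp v) hK).indeg v)
      · have : E.filter (fun f => f.2 = v) = ∅ := by
          rw [Finset.filter_eq_empty_iff]
          intro f hf hfv
          exact hvX (hfv ▸ hheads f hf)
        rw [this]
        simp
    · -- rootdeg
      rw [Finset.card_eq_zero, Finset.filter_eq_empty_iff]
      intro f hf hfr
      exact hrX (hfr ▸ hheads f hf)
    · -- acyc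
      have hnotoR : ∀ x, ¬ Relation.TransGen (fun p q => (p, q) ∈ E) x r := by
        intro x hx
        obtain ⟨b, _, hbr⟩ := Relation.TransGen.tail'_iff.1 hx
        exact hrX (hheads _ hbr)
      intro v hv
      by_cases hvX : v ∈ X
      · have hK : comp v ∈ CS := Finset.mem_image_of_mem comp hvX
        exact (hTree (comp v) hK).acyc v (hliftT (comp v) hK hv (hcompself v hvX)).2
      · rcases eq_or_ne v r with rfl | hvr
        · exact hnotoR v hv
        · obtain ⟨b, hvb, _⟩ := Relation.TransGen.head'_iff.1 hv
          obtain ⟨K, hK, h | h⟩ := hEmem _ hvb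
          · have : v = r := congrArg Prod.fst h
            exact hvr this
          · exact hvX (hKX K hK ((hTree K hK).ends _ h).1)
    · -- desc
      intro f hf hf1
      have hf2S : f.2 ∈ S := hcl f hf hf1
      have hf2X : f.2 ∈ X := Finset.mem_erase.2 ⟨hrmax f hf hf1, hf2S⟩
      rcases eq_or_ne f.1 r with h1 | h1
      · have hK : comp f.2 ∈ CS := Finset.mem_image_of_mem comp hf2X
        have h2 := (hTree (comp f.2) hK).reach f.2 (hcompself f.2 hf2X)
        have h3 : Relation.ReflTransGen (fun p q => (p, q) ∈ E) (rt (comp f.2) hK) f.2 :=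
          Relation.ReflTransGen.mono (fun p q hpq => hEt_sub (comp f.2) hK hpq) _ _ h2
        rw [h1]
        exact Relation.TransGen.head' (hroot_arc (comp f.2) hK) h3
      · have hf1X : f.1 ∈ X := Finset.mem_erase.2 ⟨h1, hf1⟩
        have hK : comp f.1 ∈ CS := Finset.mem_image_of_mem comp hf1X
        have h2 := (hTree (comp f.1) hK).desc f hf (hcompself f.1 hf1X)
        exact Relation.TransGen.mono (fun p q hpq => hEt_sub (comp f.1) hK hpq) _ _ h2
    · -- canon
      intro t ht
      rcases eq_or_ne t r with rfl | htr
      · have hDeq : Dset E S t = S := by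
          ext v
          simp only [Dset, Finset.mem_filter]
          constructor
          · rintro ⟨hv, _⟩; exact hv
          · intro hv
            refine ⟨hv, ?_⟩
            rcases eq_or_ne v t with rfl | hvt
            · exact Relation.ReflTransGen.refl
            · have hvX : v ∈ X := Finset.mem_erase.2 ⟨hvt, hv⟩
              have hK : comp v ∈ CS := Finset.mem_image_of_mem comp hvX
              have h1 := (hTree (comp v) hK).reach v (hcompself v hvX)
              exact Relation.ReflTransGen.head (hroot_arc (comp v) hK)
                (Relation.ReflTransGen.mono (fun p q hpq => hEt_sub (comp v) hK hpq) _ _ h1)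
        rw [hDeq]
        exact hconn
      · have htX : t ∈ X := Finset.mem_erase.2 ⟨htr, ht⟩
        have hK : comp t ∈ CS := Finset.mem_image_of_mem comp htX
        have hDeq : Dset E S t = Dset (Et (comp t) hK) (comp t) t := by
          ext v
          simp only [Dset, Finset.mem_filter]
          constructor
          · rintro ⟨hvS, hrtg⟩
            obtain ⟨h1, h2⟩ := hliftR (comp t) hK hrtg (hcompself t htX)
            exact ⟨h1, h2⟩
          · rintro ⟨hvK, hrtg⟩
            exact ⟨Finset.mem_of_mem_erase (hKX (comp t) hK hvK),
              Relation.ReflTransGen.mono (fun p q hpq => hEt_sub (comp t) hK hpq) _ _ hrtg⟩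
        rw [hDeq]
        exact (hTree (comp t) hK).canon t (hcompself t htX)

end Digr

/-- a level-`c` binary phylogenetic network has scanwidth ≤ `c + 1`. -/
theorem stmt16 {V : Type} [DecidableEq V] (N : Digr V) (c : ℕ)
    (hN : N.IsNetwork) (hb : BinaryD N) (hlev : LevelAtMost N c) :
    N.scanwidth ≤ c + 1 := by
  classical
  have hacyc : N.Acyclic := hN.1.1
  obtain ⟨ρ, hρroot, hρuniq⟩ := hN.1.2
  have hρv : ρ ∈ N.verts := hρroot.1
  have hclosed : N.ClosedOn N.verts := fun f hf _ => (N.arc_mem f hf).2.1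
  have hconv : ∀ {x y : V}, N.Reach x y →
      Relation.ReflTransGen (N.wrel N.verts) x y := by
    intro x y h
    induction h with
    | refl => exact Relation.ReflTransGen.refl
    | @tail b c hxb hbc ih =>
      exact ih.tail ⟨(N.arc_mem _ hbc).1, (N.arc_mem _ hbc).2.1, Or.inl hbc⟩
  have hconn : N.ConnOn N.verts := by
    intro u hu v hv
    exact (Digr.rtg_symm (N.wrel_symm N.verts)
      (hconv (N.reach_root hacyc hρuniq u hu))).trans
      (hconv (N.reach_root hacyc hρuniq v hv))
  obtain ⟨E, r, hT⟩ := N.build hacyc N.verts.card N.verts le_rfl ⟨ρ, hρv⟩ hclosed hconn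
  set Γ : Digr V := ⟨N.verts, E, fun f hf => hT.ends f hf⟩ with hΓdef
  have hΓadj : ∀ {p q : V}, Γ.Adj p q ↔ (p, q) ∈ E := by
    intro p q; exact Iff.rfl
  -- Γ is a tree extension
  have hΓacyc : Γ.Acyclic := fun v hv => hT.acyc v hv
  have hTE : IsTreeExt N Γ := by
    refine ⟨⟨⟨hΓacyc, ⟨r, ⟨hT.root_mem, ?_⟩, ?_⟩⟩, ?_⟩, rfl, ?_⟩
    · exact hT.rootdeg
    · rintro y ⟨hyv, hy0⟩
      rcases (hT.reach y hyv).cases_tail with h | ⟨z, _, hzy⟩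
      · exact h
      · exfalso
        have h1 : (z, y) ∈ E.filter (fun f => f.2 = y) := Finset.mem_filter.2 ⟨hzy, rfl⟩
        have h2 : (E.filter (fun f => f.2 = y)).card = 0 := hy0
        rw [Finset.card_eq_zero] at h2
        rw [h2] at h1
        exact absurd h1 (Finset.notMem_empty _)
    · intro v _
      exact hT.indeg v
    · intro a ha
      exact hT.desc a ha (N.arc_mem _ ha).1
  -- convert N-reachability into Γ-reachability
  have hNreachΓ : ∀ {x y : V}, N.Reach x y → x ∈ N.verts →
      Relation.ReflTransGen (fun p q => (p, q) ∈ E) x y := by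
    intro x y h hx
    induction h with
    | refl => exact Relation.ReflTransGen.refl
    | @tail b c hxb hbc ih =>
      exact ih.trans (hT.desc (b, c) hbc (N.arc_mem _ hbc).1).to_reflTransGen
  -- bound swOf
  have hsw : swOf N Γ ≤ c + 1 := by
    apply Finset.sup_le
    intro t ht
    set Dt := Dset E N.verts t with hDt
    have hDtmem : ∀ {v : V}, v ∈ Dt ↔ v ∈ N.verts ∧
        Relation.ReflTransGen (fun p q => (p, q) ∈ E) t v := by
      intro v; exact Finset.mem_filter
    have hsub : GW N Γ t ⊆ ↑(N.cutF Dt) := by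
      intro a ha
      obtain ⟨haarc, hs, hr'⟩ := ha
      rw [Finset.mem_coe, Digr.cutF, Finset.mem_filter]
      refine ⟨haarc, ?_, hDtmem.2 ⟨(N.arc_mem _ haarc).2.1, hr'⟩⟩
      intro hmem
      have hrtg := (hDtmem.1 hmem).2
      exact hT.acyc a.1 (Relation.TransGen.trans_left hs hrtg)
    have h1 : (GW N Γ t).ncard ≤ (N.cutF Dt).card := by
      calc (GW N Γ t).ncard ≤ (↑(N.cutF Dt) : Set (V × V)).ncard :=
            Set.ncard_le_ncard hsub ((N.cutF Dt).finite_toSet)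
        _ = (N.cutF Dt).card := Set.ncard_coe_finset _
    have h2 : (N.cutF Dt).card ≤ c + 1 := by
      by_cases hρin : ρ ∈ Dt
      · have hDteq : Dt = N.verts := by
          apply Finset.Subset.antisymm
          · exact Finset.filter_subset _ _
          · intro v hv
            have hreach := N.reach_root hacyc hρuniq v hv
            exact hDtmem.2 ⟨hv, ((hDtmem.1 hρin).2).trans (hNreachΓ hreach hρv)⟩
        have : N.cutF Dt = ∅ := by
          rw [hDteq, Digr.cutF, Finset.filter_eq_empty_iff]
          rintro f hf ⟨h1', _⟩
          exact h1' (N.arc_mem _ hf).1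
        rw [this]
        simp
      · apply N.key_cut_bound c hacyc hb hρuniq hlev Dt
        · intro f hf hf1
          have := (hDtmem.1 hf1).2
          exact hDtmem.2 ⟨(N.arc_mem _ hf).2.1,
            this.trans (hT.desc f hf (N.arc_mem _ hf).1).to_reflTransGen⟩
        · exact hT.canon t ht
        · exact hρin
    exact le_trans h1 h2
  have hmem : swOf N Γ ∈ {k | ∃ Γ' : Digr V, IsTreeExt N Γ' ∧ swOf N Γ' = k} :=
    ⟨Γ, hTE, rfl⟩
  exact le_trans (Nat.sInf_le hmem) hsw
end

section
/- For every tree extension Γ of a rooted DAG D, there exists a canonical tree extension Γ' of D with sw_D(Γ') ≤ sw_D(Γ). -/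
namespace Digr

variable {V : Type} [DecidableEq V]

lemma sreach_of_reach_ne {D : Digr V} {u v : V} (h : D.Reach u v) (hne : u ≠ v) :
    D.SReach u v := by
  rcases Relation.reflTransGen_iff_eq_or_transGen.mp h with h' | h'
  · exact absurd h'.symm hne
  · exact h'

lemma reach_antisymm {D : Digr V} (hac : D.Acyclic) {u v : V}
    (h1 : D.Reach u v) (h2 : D.Reach v u) : u = v := by
  by_contra hne
  exact hac v (Relation.TransGen.trans_right h2 (sreach_of_reach_ne h1 hne))

lemma parent_unique {Γ : Digr V} (hT : Γ.IsOutTree) {p q v : V}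
    (hp : (p, v) ∈ Γ.arcs) (hq : (q, v) ∈ Γ.arcs) : p = q := by
  have hv : v ∈ Γ.verts := (Γ.arc_mem _ hp).2.1
  have h1 : (Γ.arcs.filter fun a => a.2 = v).card ≤ 1 := hT.2 v hv
  have hp' : (p, v) ∈ Γ.arcs.filter (fun a => a.2 = v) := by simp [hp]
  have hq' : (q, v) ∈ Γ.arcs.filter (fun a => a.2 = v) := by simp [hq]
  exact congrArg Prod.fst (Finset.card_le_one.mp h1 _ hp' _ hq')

lemma no_arc_into_root {Γ : Digr V} {r : V} (hr : Γ.IsRoot r) {p : V}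
    (h : (p, r) ∈ Γ.arcs) : False := by
  have hmem : (p, r) ∈ Γ.arcs.filter (fun a => a.2 = r) := by simp [h]
  have h0 : (Γ.arcs.filter fun a => a.2 = r).card = 0 := hr.2
  rw [Finset.card_eq_zero] at h0
  simp [h0] at hmem

lemma tree_comparable {Γ : Digr V} (hT : Γ.IsOutTree) {a v : V} (ha : Γ.Reach a v) :
    ∀ b, Γ.Reach b v → Γ.Reach a b ∨ Γ.Reach b a := by
  induction ha with
  | refl => intro b hb; exact Or.inr hb
  | @tail c v hac hcv ih =>
    intro b hb
    rcases Relation.ReflTransGen.cases_tail hb with h | ⟨q, hbq, hqv⟩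
    · subst h; exact Or.inl (hac.tail hcv)
    · have hq : q = c := parent_unique hT hqv hcv
      subst hq
      exact ih b hbq

/-- One weak-adjacency step within the Γ-descendants of `t`. -/
def DRel (D Γ : Digr V) (t : V) (a b : V) : Prop :=
  Γ.Reach t a ∧ Γ.Reach t b ∧ ((a, b) ∈ D.arcs ∨ (b, a) ∈ D.arcs)

/-- `v` lies in the weak component of `t` in `D` restricted to Γ-descendants of `t`. -/
def Desc (D Γ : Digr V) (t v : V) : Prop := Relation.ReflTransGen (DRel D Γ t) t v

lemma drel_symm {D Γ : Digr V} {t : V} : Symmetric (DRel D Γ t) := by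
  intro a b ⟨h1, h2, h3⟩; exact ⟨h2, h1, h3.symm⟩

lemma desc_refl {D Γ : Digr V} (t : V) : Desc D Γ t t := Relation.ReflTransGen.refl

lemma desc_reach {D Γ : Digr V} {t v : V} (h : Desc D Γ t v) : Γ.Reach t v := by
  induction h with
  | refl => exact Relation.ReflTransGen.refl
  | tail _ hstep _ => exact hstep.2.1

lemma drel_mono {D Γ : Digr V} {s t : V} (hst : Γ.Reach s t) {a b : V}
    (h : DRel D Γ t a b) : DRel D Γ s a b :=
  ⟨hst.trans h.1, hst.trans h.2.1, h.2.2⟩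

lemma desc_trans {D Γ : Digr V} {s t v : V} (h1 : Desc D Γ s t) (h2 : Desc D Γ t v) :
    Desc D Γ s v :=
  h1.trans (Relation.ReflTransGen.mono (fun _ _ h => drel_mono (desc_reach h1) h) _ _ h2)

lemma desc_mem {D Γ : Digr V} {t v : V} (h : Desc D Γ t v) :
    v = t ∨ v ∈ D.verts := by
  rcases Relation.ReflTransGen.cases_tail h with h' | ⟨c, _, hstep⟩
  · exact Or.inl h'
  · rcases hstep.2.2 with ha | ha
    · exact Or.inr (D.arc_mem _ ha).2.1
    · exact Or.inr (D.arc_mem _ ha).1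

lemma desc_antisymm {D Γ : Digr V} (hac : Γ.Acyclic) {u v : V}
    (h1 : Desc D Γ u v) (h2 : Desc D Γ v u) : u = v :=
  reach_antisymm hac (desc_reach h1) (desc_reach h2)

/-- Two "Desc-ancestors" of a common vertex are Desc-comparable. -/
lemma desc_comparable {D Γ : Digr V} (hT : Γ.IsOutTree) {t1 t2 v : V}
    (h1 : Desc D Γ t1 v) (h2 : Desc D Γ t2 v) :
    Desc D Γ t1 t2 ∨ Desc D Γ t2 t1 := by
  have key : ∀ s1 s2 : V, Γ.Reach s1 s2 → Desc D Γ s1 v → Desc D Γ s2 v →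
      Desc D Γ s1 s2 := by
    intro s1 s2 hr hd1 hd2
    have hd2' : Relation.ReflTransGen (DRel D Γ s1) s2 v :=
      Relation.ReflTransGen.mono (fun _ _ h => drel_mono hr h) _ _ hd2
    have hback : Relation.ReflTransGen (DRel D Γ s1) v s2 :=
      (@Relation.ReflTransGen.stdSymm _ _ ⟨fun _ _ h => drel_symm h⟩).symm _ _ hd2'
    exact hd1.trans hback
  rcases tree_comparable hT (desc_reach h1) t2 (desc_reach h2) with h | h
  · exact Or.inl (key t1 t2 h h1 h2)
  · exact Or.inr (key t2 t1 h h2 h1)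

open Classical in
/-- In a rooted digraph, the root reaches every vertex. -/
lemma root_reach {E : Digr V} (hE : E.Rooted) {r : V} (hr : E.IsRoot r) :
    ∀ v ∈ E.verts, E.Reach r v := by
  classical
  suffices H : ∀ n : ℕ, ∀ v ∈ E.verts,
      (E.verts.filter fun u => E.SReach u v).card ≤ n → E.Reach r v by
    intro v hv
    exact H _ v hv le_rfl
  intro n
  induction n with
  | zero =>
    intro v hv hcard
    by_cases h0 : E.inDeg v = 0
    · have : v = r := (hE.2.choose_spec.2 v ⟨hv, h0⟩).trans
        (hE.2.choose_spec.2 r hr).symm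
      subst this; exact Relation.ReflTransGen.refl
    · exfalso
      obtain ⟨a, ha⟩ := Finset.card_pos.mp (Nat.pos_of_ne_zero h0)
      rw [Finset.mem_filter] at ha
      have hmem : a.1 ∈ E.verts.filter fun u => E.SReach u v := by
        rw [Finset.mem_filter]
        refine ⟨(E.arc_mem _ ha.1).1, Relation.TransGen.single ?_⟩
        show (a.1, v) ∈ E.arcs
        have heq : a = (a.1, v) := by rw [← ha.2]
        rw [← heq]; exact ha.1
      have : 0 < (E.verts.filter fun u => E.SReach u v).card :=
        Finset.card_pos.mpr ⟨a.1, hmem⟩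
      omega
  | succ n ih =>
    intro v hv hcard
    by_cases h0 : E.inDeg v = 0
    · have : v = r := (hE.2.choose_spec.2 v ⟨hv, h0⟩).trans
        (hE.2.choose_spec.2 r hr).symm
      subst this; exact Relation.ReflTransGen.refl
    · obtain ⟨a, ha⟩ := Finset.card_pos.mp (Nat.pos_of_ne_zero h0)
      rw [Finset.mem_filter] at ha
      have harc : (a.1, v) ∈ E.arcs := by
        have heq : a = (a.1, v) := by rw [← ha.2]
        rw [← heq]; exact ha.1
      set p := a.1 with hp
      have hpv : p ∈ E.verts := (E.arc_mem _ harc).1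
      have hsub : (E.verts.filter fun u => E.SReach u p) ⊂
          (E.verts.filter fun u => E.SReach u v) := by
        constructor
        · intro u hu
          rw [Finset.mem_filter] at hu ⊢
          exact ⟨hu.1, hu.2.tail harc⟩
        · intro hcontra
          have hpin : p ∈ E.verts.filter fun u => E.SReach u v := by
            rw [Finset.mem_filter]
            exact ⟨hpv, Relation.TransGen.single harc⟩
          have := hcontra hpin
          rw [Finset.mem_filter] at this
          exact hE.1 p this.2
      have hlt := Finset.card_lt_card hsub
      have : E.Reach r p := ih p hpv (by omega)
      exact this.tail harc

end Digr


open Digr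

/-- every tree extension can be made canonical without increasing
the width. -/
theorem stmt17 {V : Type} [DecidableEq V] (D Γ : Digr V)
    (hD : D.Rooted) (hΓ : IsTreeExt D Γ) :
    ∃ Γ' : Digr V, Canonical D Γ' ∧ swOf D Γ' ≤ swOf D Γ := by
  classical
  obtain ⟨hOT, hVeq, hArcs⟩ := hΓ
  have hΓac : Γ.Acyclic := hOT.1.1
  obtain ⟨rD, hrD, -⟩ := hD.2
  obtain ⟨rΓ, hrΓ, hrΓuniq⟩ := hOT.1.2
  have hvertrΓ : rΓ ∈ D.verts := by rw [← hVeq]; exact hrΓ.1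
  have hrootΓ : ∀ v ∈ D.verts, Γ.Reach rΓ v := fun v hv =>
    root_reach hOT.1 hrΓ v (by rw [hVeq]; exact hv)
  have hrootD : ∀ v ∈ D.verts, D.Reach rD v := root_reach hD hrD
  -- weak connectivity: everything is a Desc-descendant of rΓ
  have hDreach_w : ∀ u, D.Reach rD u → Relation.ReflTransGen (DRel D Γ rΓ) rD u := by
    intro u h
    induction h with
    | refl => exact Relation.ReflTransGen.refl
    | tail hprev hadj ih =>
      exact ih.tail ⟨hrootΓ _ (D.arc_mem _ hadj).1,
        hrootΓ _ (D.arc_mem _ hadj).2.1, Or.inl hadj⟩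
  have hw : ∀ v ∈ D.verts, Desc D Γ rΓ v := by
    intro v hv
    have h1 := hDreach_w rΓ (hrootD rΓ hvertrΓ)
    have h2 := hDreach_w v (hrootD v hv)
    exact ((@Relation.ReflTransGen.stdSymm _ _ ⟨fun _ _ h => drel_symm h⟩).symm _ _ h1).trans h2
  -- existence of the parent function
  have hpa_ex : ∀ v : V, ∃ u : V, v ∈ D.verts → v ≠ rΓ →
      (u ∈ D.verts ∧ u ≠ v ∧ Desc D Γ u v) ∧
      ∀ u', u' ∈ D.verts → u' ≠ v → Desc D Γ u' v → Desc D Γ u' u := by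
    intro v
    by_cases hc : v ∈ D.verts ∧ v ≠ rΓ
    · obtain ⟨hv, hne⟩ := hc
      have hAne : (D.verts.filter fun u => u ≠ v ∧ Desc D Γ u v).Nonempty := by
        refine ⟨rΓ, ?_⟩
        rw [Finset.mem_filter]
        exact ⟨hvertrΓ, Ne.symm hne, hw v hv⟩
      obtain ⟨u, huA, hmax⟩ := Finset.exists_max_image _
        (fun u => (D.verts.filter fun x => Desc D Γ x u).card) hAne
      rw [Finset.mem_filter] at huA
      refine ⟨u, fun _ _ => ⟨⟨huA.1, huA.2.1, huA.2.2⟩, ?_⟩⟩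
      intro u' hu'v hu'ne hu'desc
      rcases desc_comparable hOT huA.2.2 hu'desc with hcmp | hcmp
      · by_cases heq : u' = u
        · subst heq; exact desc_refl u'
        · exfalso
          have hmla := hmax u' (by rw [Finset.mem_filter]; exact ⟨hu'v, hu'ne, hu'desc⟩)
          have hss : (D.verts.filter fun x => Desc D Γ x u) ⊂
              (D.verts.filter fun x => Desc D Γ x u') := by
            constructor
            · intro x hxm
              rw [Finset.mem_filter] at hxm ⊢
              exact ⟨hxm.1, desc_trans hxm.2 hcmp⟩
            · intro hcon
              have hm : u' ∈ D.verts.filter fun x => Desc D Γ x u' := by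
                rw [Finset.mem_filter]; exact ⟨hu'v, desc_refl u'⟩
              have h2 := hcon hm
              rw [Finset.mem_filter] at h2
              exact heq (desc_antisymm hΓac h2.2 hcmp)
          have := Finset.card_lt_card hss
          omega
      · exact hcmp
    · exact ⟨v, fun h1 h2 => absurd ⟨h1, h2⟩ hc⟩
  choose pa hpa using hpa_ex
  -- the new tree
  set arcs' : Finset (V × V) :=
    (D.verts.filter (fun v => v ≠ rΓ)).image (fun v => (pa v, v)) with harcs'def
  have harcs' : ∀ u v : V, (u, v) ∈ arcs' ↔ (v ∈ D.verts ∧ v ≠ rΓ ∧ u = pa v) := by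
    intro u v
    rw [harcs'def]
    simp only [Finset.mem_image, Finset.mem_filter, Prod.mk.injEq]
    constructor
    · rintro ⟨w, ⟨hw1, hw2⟩, h1, rfl⟩
      exact ⟨hw1, hw2, h1.symm⟩
    · rintro ⟨h1, h2, rfl⟩; exact ⟨v, ⟨h1, h2⟩, rfl, rfl⟩
  have harc_mem : ∀ a ∈ arcs', a.1 ∈ D.verts ∧ a.2 ∈ D.verts ∧ a.1 ≠ a.2 := by
    intro a ha
    obtain ⟨h1, h2, h3⟩ := (harcs' a.1 a.2).mp ha
    obtain ⟨⟨hq1, hq2, -⟩, -⟩ := hpa a.2 h1 h2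
    exact ⟨by rw [h3]; exact hq1, h1, by rw [h3]; exact hq2⟩
  set Γ' : Digr V := ⟨D.verts, arcs', harc_mem⟩ with hΓ'def
  have hΓ'arcs : Γ'.arcs = arcs' := rfl
  have hΓ'verts : Γ'.verts = D.verts := rfl
  -- Reach in Γ' implies Desc
  have reach'_desc : ∀ t v : V, Γ'.Reach t v → Desc D Γ t v := by
    intro t v h
    induction h with
    | refl => exact desc_refl t
    | tail hprev hadj ih =>
      obtain ⟨h1, h2, h3⟩ := (harcs' _ _).mp hadj
      subst h3
      exact desc_trans ih (hpa _ h1 h2).1.2.2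
  -- Γ'-adjacency gives strict Γ-reachability
  have adj'_sreach : ∀ u v : V, Γ'.Adj u v → Γ.SReach u v := by
    intro u v hadj
    obtain ⟨h1, h2, h3⟩ := (harcs' u v).mp hadj
    subst h3
    obtain ⟨⟨-, hq2, hq3⟩, -⟩ := hpa v h1 h2
    exact sreach_of_reach_ne (desc_reach hq3) hq2
  have sreach'_sreach : ∀ u v : V, Γ'.SReach u v → Γ.SReach u v := by
    intro u v h
    induction h with
    | single hadj => exact adj'_sreach _ _ hadj
    | tail _ hadj ih => exact ih.trans (adj'_sreach _ _ hadj)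
  -- a non-root target of Desc
  have hne_root : ∀ t v : V, t ≠ v → Desc D Γ t v → v ≠ rΓ := by
    intro t v hne hd hveq
    have hre : Γ.SReach t v := sreach_of_reach_ne (desc_reach hd) hne
    obtain ⟨c, -, hc⟩ := Relation.TransGen.tail'_iff.mp hre
    exact no_arc_into_root hrΓ (show (c, rΓ) ∈ Γ.arcs from hveq ▸ hc)
  -- Desc implies Reach in Γ'
  have desc_reach'_aux : ∀ n : ℕ, ∀ v ∈ D.verts,
      (D.verts.filter fun x => x ≠ v ∧ Desc D Γ x v).card ≤ n →
      ∀ t ∈ D.verts, Desc D Γ t v → Γ'.Reach t v := by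
    intro n
    induction n with
    | zero =>
      intro v hv hcard t ht hd
      by_cases hne : t = v
      · subst hne; exact Relation.ReflTransGen.refl
      · exfalso
        have : t ∈ D.verts.filter fun x => x ≠ v ∧ Desc D Γ x v := by
          rw [Finset.mem_filter]; exact ⟨ht, hne, hd⟩
        have := Finset.card_pos.mpr ⟨t, this⟩
        omega
    | succ n ih =>
      intro v hv hcard t ht hd
      by_cases hne : t = v
      · subst hne; exact Relation.ReflTransGen.refl
      · have hvr : v ≠ rΓ := hne_root t v hne hd
        obtain ⟨⟨hp1, hp2, hp3⟩, hmin⟩ := hpa v hv hvr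
        have hdt : Desc D Γ t (pa v) := hmin t ht hne hd
        have hss : (D.verts.filter fun x => x ≠ pa v ∧ Desc D Γ x (pa v)) ⊂
            (D.verts.filter fun x => x ≠ v ∧ Desc D Γ x v) := by
          constructor
          · intro x hx
            rw [Finset.mem_filter] at hx ⊢
            refine ⟨hx.1, ?_, desc_trans hx.2.2 hp3⟩
            intro hxv
            subst hxv
            exact hx.2.1 (desc_antisymm hΓac hp3 hx.2.2).symm
          · intro hcon
            have hm : pa v ∈ D.verts.filter fun x => x ≠ v ∧ Desc D Γ x v := by
              rw [Finset.mem_filter]; exact ⟨hp1, hp2, hp3⟩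
            have h2 := hcon hm
            rw [Finset.mem_filter] at h2
            exact h2.2.1 rfl
        have hlt := Finset.card_lt_card hss
        have hrec : Γ'.Reach t (pa v) := ih (pa v) hp1 (by omega) t ht hdt
        refine hrec.tail ?_
        show (pa v, v) ∈ Γ'.arcs
        rw [hΓ'arcs]
        exact (harcs' (pa v) v).mpr ⟨hv, hvr, rfl⟩
  have desc_reach' : ∀ t ∈ D.verts, ∀ v ∈ D.verts, Desc D Γ t v → Γ'.Reach t v :=
    fun t ht v hv h => desc_reach'_aux _ v hv le_rfl t ht h
  -- assemble
  refine ⟨Γ', ⟨⟨⟨⟨?_, ?_⟩, ?_⟩, rfl, ?_⟩, ?_⟩, ?_⟩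
  · -- acyclic
    intro v h
    exact hΓac v (sreach'_sreach v v h)
  · -- unique root
    have hin0 : Γ'.inDeg rΓ = 0 := by
      show (arcs'.filter fun a => a.2 = rΓ).card = 0
      rw [Finset.card_eq_zero, Finset.eq_empty_iff_forall_notMem]
      intro a ha
      rw [Finset.mem_filter] at ha
      obtain ⟨-, h2, -⟩ := (harcs' a.1 a.2).mp ha.1
      exact h2 ha.2
    refine ⟨rΓ, ⟨hvertrΓ, hin0⟩, ?_⟩
    intro v hvroot
    by_contra hne
    have harc : (pa v, v) ∈ arcs' := (harcs' (pa v) v).mpr ⟨hvroot.1, hne, rfl⟩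
    have hm : (pa v, v) ∈ arcs'.filter fun a => a.2 = v := by
      rw [Finset.mem_filter]; exact ⟨harc, rfl⟩
    have h0 : (arcs'.filter fun a => a.2 = v).card = 0 := hvroot.2
    rw [Finset.card_eq_zero] at h0
    simp [h0] at hm
  · -- in-degree at most one
    intro v hv
    show (arcs'.filter fun a => a.2 = v).card ≤ 1
    have hsub : (arcs'.filter fun a => a.2 = v) ⊆ {(pa v, v)} := by
      intro a ha
      rw [Finset.mem_filter] at ha
      obtain ⟨-, -, h3⟩ := (harcs' a.1 a.2).mp ha.1
      rw [Finset.mem_singleton, Prod.ext_iff]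
      exact ⟨by rw [h3, ha.2], ha.2⟩
    have := Finset.card_le_card hsub
    simpa using this
  · -- arcs of D are realized
    intro a ha
    have h1 := D.arc_mem a ha
    have hre : Γ.Reach a.1 a.2 := (hArcs a ha).to_reflTransGen
    have hd : Desc D Γ a.1 a.2 :=
      Relation.ReflTransGen.single ⟨Relation.ReflTransGen.refl, hre, Or.inl ha⟩
    exact sreach_of_reach_ne (desc_reach' a.1 h1.1 a.2 h1.2.1 hd) h1.2.2
  · -- canonicity
    intro t ht
    have ht' : t ∈ D.verts := ht
    intro u hu v hv
    have key : ∀ w, Desc D Γ t w → Relation.ReflTransGen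
        (fun a b => a ∈ {x | Γ'.Reach t x} ∧ b ∈ {x | Γ'.Reach t x} ∧
          ((a, b) ∈ D.arcs ∨ (b, a) ∈ D.arcs)) t w := by
      intro w hw'
      induction hw' with
      | refl => exact Relation.ReflTransGen.refl
      | tail hprev hstep ih =>
        rename_i c w'
        have hreach : ∀ z, Desc D Γ t z → Γ'.Reach t z := by
          intro z hz
          rcases desc_mem hz with h | h
          · subst h; exact Relation.ReflTransGen.refl
          · exact desc_reach' t ht' z h hz
        exact ih.tail ⟨hreach c hprev, hreach w' (hprev.tail hstep), hstep.2.2⟩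
    have hsymm : Symmetric (fun a b => a ∈ {x | Γ'.Reach t x} ∧ b ∈ {x | Γ'.Reach t x} ∧
        ((a, b) ∈ D.arcs ∨ (b, a) ∈ D.arcs)) := by
      intro a b ⟨x, y, z⟩; exact ⟨y, x, z.symm⟩
    have hu' := key u (reach'_desc t u hu)
    have hv' := key v (reach'_desc t v hv)
    exact ((@Relation.ReflTransGen.stdSymm _ _ ⟨fun _ _ h => hsymm h⟩).symm _ _ hu').trans hv'
  · -- width does not increase
    unfold swOf
    have hVv : Γ'.verts = Γ.verts := hVeq.symm
    rw [hVv]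
    apply Finset.sup_mono_fun
    intro t ht
    apply Set.ncard_le_ncard
    · rintro a ⟨ha1, ha2, ha3⟩
      exact ⟨ha1, sreach'_sreach a.1 t ha2, desc_reach (reach'_desc t a.2 ha3)⟩
    · exact (D.arcs.finite_toSet).subset (fun a ha => ha.1)
end
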